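/- For all f, f* ∈ M, the operator W satisfies ‖W(f) − W(f*)‖ ≤ φ̂(α₀)·‖f − f*‖, where φ̂(α₀) := 2·L₂ᴹ·β·α₀^β·F̄₂(α₀)·exp(a·N₂ᴹ/(L₂ₘ·(β−σ−1)·α₀^{β−σ−2})) and F̄₂(α₀) = (α₀·a/(β·L₂ₘ²))·(N̄₂/((β−1)·α₀^{β−1}) + L̄₂·N₂ᴹ/(L₂ₘ·(2β−σ−1)·α₀^{2β−σ−1}))·α₀^{−β} + L̄₂/(2β·L₂ₘ²·α₀^{2β}). -/

import Mathlib

open Real Set Filter MeasureTheory Topology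

noncomputable section

/-- Sup norm on `[α₀,∞)`. -/
def supIci (α₀ : ℝ) (g : ℝ → ℝ) : ℝ := ⨆ ξ : Ici α₀, |g ξ.1|

/-- Membership in the space `M`: bounded continuous on `[α₀,∞)`, `f(α₀)=0`, `f(∞)=−1`. -/
def MemM (α₀ : ℝ) (f : ℝ → ℝ) : Prop :=
  ContinuousOn f (Ici α₀) ∧ (∃ C : ℝ, ∀ ξ ∈ Ici α₀, |f ξ| ≤ C) ∧
    f α₀ = 0 ∧ Tendsto f atTop (nhds (-1))

/-- `E₂(ξ,f) = exp(−α₀·a·∫_{α₀}^{ξ} N*(f)(s)/L*(f)(s) ds)`. -/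
def E2 (α₀ a : ℝ) (Lstar Nstar : (ℝ → ℝ) → ℝ → ℝ) (f : ℝ → ℝ) (ξ : ℝ) : ℝ :=
  Real.exp (-(α₀ * a * ∫ s in α₀..ξ, Nstar f s / Lstar f s))

/-- `F₂(ξ,f) = ∫_{α₀}^{ξ} E₂(s,f)/(s·L*(f)(s)) ds`. -/
def F2 (α₀ a : ℝ) (Lstar Nstar : (ℝ → ℝ) → ℝ → ℝ) (f : ℝ → ℝ) (ξ : ℝ) : ℝ :=
  ∫ s in α₀..ξ, E2 α₀ a Lstar Nstar f s / (s * Lstar f s)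

/-- The operator `W(f)(ξ) = −F₂(ξ,f)/F₂(∞,f)`, where `F₂(∞,f)` is given by `Finf f`. -/
def Wop (α₀ a : ℝ) (Lstar Nstar : (ℝ → ℝ) → ℝ → ℝ) (Finf : (ℝ → ℝ) → ℝ)
    (f : ℝ → ℝ) (ξ : ℝ) : ℝ :=
  -(F2 α₀ a Lstar Nstar f ξ / Finf f)

def Iaux (α₀ : ℝ) (Lstar Nstar : (ℝ → ℝ) → ℝ → ℝ) (g : ℝ → ℝ) (x : ℝ) : ℝ :=
  ∫ t in α₀..x, Nstar g t / Lstar g t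

lemma exp_neg_lip (x y : ℝ) (hx : 0 ≤ x) (hy : 0 ≤ y) :
    |Real.exp (-x) - Real.exp (-y)| ≤ |x - y| := by
  have key : ∀ u v : ℝ, 0 ≤ u → u ≤ v → Real.exp (-u) - Real.exp (-v) ≤ v - u := by
    intro u v hu huv
    have h1 : Real.exp (-u) - Real.exp (-v) = Real.exp (-u) * (1 - Real.exp (-(v - u))) := by
      rw [mul_sub, mul_one, ← Real.exp_add]; ring_nf
    rw [h1]
    have h2 : 1 - Real.exp (-(v - u)) ≤ v - u := by
      have := Real.add_one_le_exp (-(v - u)); linarith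
    have h3 : Real.exp (-u) ≤ 1 := Real.exp_le_one_iff.mpr (by linarith)
    have h4 : 0 ≤ 1 - Real.exp (-(v - u)) := by
      have : Real.exp (-(v - u)) ≤ 1 := Real.exp_le_one_iff.mpr (by linarith)
      linarith
    calc Real.exp (-u) * (1 - Real.exp (-(v-u))) ≤ 1 * (1 - Real.exp (-(v-u))) := by
          apply mul_le_mul_of_nonneg_right h3 h4
      _ ≤ v - u := by linarith
  rcases le_total x y with h | h
  · rw [abs_of_nonneg (by have := Real.exp_le_exp.mpr (neg_le_neg h); linarith),
      abs_of_nonpos (by linarith)]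
    have := key x y hx h; linarith
  · rw [abs_of_nonpos (by have := Real.exp_le_exp.mpr (neg_le_neg h); linarith),
      abs_of_nonneg (by linarith)]
    have := key y x hy h; linarith

lemma intInt_rpow (α₀ ξ r : ℝ) (h0 : 0 < α₀) (hle : α₀ ≤ ξ) :
    IntervalIntegrable (fun s : ℝ => s ^ r) volume α₀ ξ := by
  apply ContinuousOn.intervalIntegrable
  apply ContinuousOn.rpow_const continuousOn_id
  intro x hx; left
  rw [Set.uIcc_of_le hle] at hx
  exact ne_of_gt (lt_of_lt_of_le h0 hx.1)

lemma int_rpow_le (α₀ ξ p : ℝ) (h0 : 0 < α₀) (hle : α₀ ≤ ξ) (hp : 1 < p) :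
    ∫ s in α₀..ξ, s ^ (-p) ≤ α₀ ^ (1 - p) / (p - 1) := by
  rw [integral_rpow (Or.inr ⟨by intro h; linarith,
    by rw [Set.uIcc_of_le hle]; intro h; exact absurd h.1 (not_le.mpr h0)⟩)]
  have he : -p + 1 = 1 - p := by ring
  rw [he]
  have key : (ξ ^ (1-p) - α₀ ^ (1-p)) / (1 - p) = (α₀ ^ (1-p) - ξ ^ (1-p)) / (p - 1) := by
    have hne : p - 1 ≠ 0 := by linarith
    have hne' : 1 - p ≠ 0 := by linarith
    field_simp
    ring
  rw [key]
  have hx : (0:ℝ) ≤ ξ ^ (1-p) := Real.rpow_nonneg (by linarith) _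
  apply div_le_div_of_nonneg_right ?_ ?_ |>.trans_eq rfl
  · linarith
  · linarith

lemma quot_diff_bound (x x' b b' Da Db bl xu : ℝ) (hb : 0 < b) (hb' : 0 < b')
    (hx' : 0 ≤ x') (hDa : |x - x'| ≤ Da) (hDb : |b - b'| ≤ Db)
    (hbl : 0 < bl) (hblb : bl ≤ b) (hblb' : bl ≤ b') (hxu : x' ≤ xu) :
    |x / b - x' / b'| ≤ Da / bl + xu * Db / (bl * bl) := by
  have hDa0 : 0 ≤ Da := le_trans (abs_nonneg _) hDa
  have hDb0 : 0 ≤ Db := le_trans (abs_nonneg _) hDb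
  have hxu0 : 0 ≤ xu := le_trans hx' hxu
  have hsplit : x / b - x' / b' = (x - x') / b + x' * (b' - b) / (b * b') := by
    field_simp
    ring
  rw [hsplit]
  refine le_trans (abs_add_le _ _) ?_
  have h1 : |(x - x') / b| ≤ Da / bl := by
    rw [abs_div, abs_of_pos hb]
    exact div_le_div₀ hDa0 hDa hbl hblb
  have h2 : |x' * (b' - b) / (b * b')| ≤ xu * Db / (bl * bl) := by
    rw [abs_div, abs_of_pos (mul_pos hb hb'), abs_mul, abs_of_nonneg hx']
    apply div_le_div₀ (by positivity) ?_ (by positivity) ?_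
    · apply mul_le_mul hxu ?_ (abs_nonneg _) hxu0
      rw [abs_sub_comm]; exact hDb
    · exact mul_le_mul hblb hblb' hbl.le (by linarith)
  linarith

set_option maxHeartbeats 4000000 in
theorem statement9
    (α₀ a β σ L2m L2M N2m N2M Lbar2 Nbar2 : ℝ)
    (hα₀ : 0 < α₀) (ha : 0 < a)
    (hβpos : 0 < β) (hσpos : 0 < σ) (hL2m : 0 < L2m) (hL2M : 0 < L2M)
    (hN2m : 0 < N2m) (hN2M : 0 < N2M) (hLbar2 : 0 < Lbar2) (hNbar2 : 0 < Nbar2)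
    (hβ : σ + 2 < β) (hLmM : L2m ≤ L2M) (hNmM : N2m ≤ N2M)
    (Lstar Nstar : (ℝ → ℝ) → ℝ → ℝ)
    (hLcont : ∀ f : ℝ → ℝ, MemM α₀ f → ContinuousOn (Lstar f) (Ici α₀))
    (hNcont : ∀ f : ℝ → ℝ, MemM α₀ f → ContinuousOn (Nstar f) (Ici α₀))
    (hLbd : ∀ f : ℝ → ℝ, MemM α₀ f → ∀ ξ ∈ Ici α₀,
      L2m * ξ ^ β ≤ Lstar f ξ ∧ Lstar f ξ ≤ L2M * ξ ^ β)
    (hNbd : ∀ f : ℝ → ℝ, MemM α₀ f → ∀ ξ ∈ Ici α₀,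
      N2m * ξ ^ σ ≤ Nstar f ξ ∧ Nstar f ξ ≤ N2M * ξ ^ σ)
    (hLlip : ∀ f fs : ℝ → ℝ, MemM α₀ f → MemM α₀ fs → ∀ ξ ∈ Ici α₀,
      |Lstar f ξ - Lstar fs ξ| ≤ Lbar2 * supIci α₀ (fun x => f x - fs x))
    (hNlip : ∀ f fs : ℝ → ℝ, MemM α₀ f → MemM α₀ fs → ∀ ξ ∈ Ici α₀,
      |Nstar f ξ - Nstar fs ξ| ≤ Nbar2 * supIci α₀ (fun x => f x - fs x))
    (Finf : (ℝ → ℝ) → ℝ)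
    (hFinf : ∀ f : ℝ → ℝ, MemM α₀ f →
      Tendsto (F2 α₀ a Lstar Nstar f) atTop (nhds (Finf f)))
    (f fs : ℝ → ℝ) (hf : MemM α₀ f) (hfs : MemM α₀ fs) :
    supIci α₀ (fun ξ => Wop α₀ a Lstar Nstar Finf f ξ - Wop α₀ a Lstar Nstar Finf fs ξ) ≤
      2 * L2M * β * α₀ ^ β *
          ((α₀ * a / (β * L2m ^ 2)) * (Nbar2 / ((β - 1) * α₀ ^ (β - 1)) +
                Lbar2 * N2M / (L2m * (2 * β - σ - 1) * α₀ ^ (2 * β - σ - 1))) * α₀ ^ (-β) +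
              Lbar2 / (2 * β * L2m ^ 2 * α₀ ^ (2 * β))) *
          Real.exp (a * N2M / (L2m * (β - σ - 1) * α₀ ^ (β - σ - 2))) *
        supIci α₀ (fun x => f x - fs x) := by
  have hβ1 : (1:ℝ) < β := by linarith
  have hβσ1 : 0 < β - σ - 1 := by linarith
  have h2βσ1 : 0 < 2 * β - σ - 1 := by linarith
  haveI : Nonempty (Ici α₀) := ⟨⟨α₀, Set.self_mem_Ici⟩⟩
  set c := a * N2M / (L2m * (β - σ - 1) * α₀ ^ (β - σ - 2)) with hcdef
  clear_value c
  set D := supIci α₀ (fun x => f x - fs x) with hDdef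
  clear_value D
  have hD0 : 0 ≤ D := by rw [hDdef]; exact Real.iSup_nonneg fun _ => abs_nonneg _
  -- basic positivity
  have hLpos : ∀ g, MemM α₀ g → ∀ t ∈ Ici α₀, 0 < Lstar g t := by
    intro g hg t ht
    have h1 := (hLbd g hg t ht).1
    have ht0 : (0:ℝ) < t := lt_of_lt_of_le hα₀ ht
    have h2 : 0 < L2m * t ^ β := by positivity
    linarith
  have hNnn : ∀ g, MemM α₀ g → ∀ t ∈ Ici α₀, 0 ≤ Nstar g t := by
    intro g hg t ht
    have h1 := (hNbd g hg t ht).1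
    have ht0 : (0:ℝ) < t := lt_of_lt_of_le hα₀ ht
    have h2 : 0 < N2m * t ^ σ := by positivity
    linarith
  have hsub : ∀ x ∈ Ici α₀, Set.uIcc α₀ x ⊆ Ici α₀ := by
    intro x hx
    rw [Set.uIcc_of_le hx]
    exact fun t ht => ht.1
  have hqcont : ∀ g, MemM α₀ g → ContinuousOn (fun t => Nstar g t / Lstar g t) (Ici α₀) := by
    intro g hg
    exact (hNcont g hg).div (hLcont g hg) (fun t ht => ne_of_gt (hLpos g hg t ht))
  have hqint : ∀ g, MemM α₀ g → ∀ x ∈ Ici α₀,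
      IntervalIntegrable (fun t => Nstar g t / Lstar g t) volume α₀ x := by
    intro g hg x hx
    exact ((hqcont g hg).mono (hsub x hx)).intervalIntegrable
  have hInn : ∀ g, MemM α₀ g → ∀ x ∈ Ici α₀, 0 ≤ Iaux α₀ Lstar Nstar g x := by
    intro g hg x hx
    apply intervalIntegral.integral_nonneg hx
    intro t ht
    exact div_nonneg (hNnn g hg t ht.1) (hLpos g hg t ht.1).le
  -- upper bound for the exponent
  have hIub : ∀ g, MemM α₀ g → ∀ x ∈ Ici α₀, α₀ * a * Iaux α₀ Lstar Nstar g x ≤ c := by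
    intro g hg x hx
    have hx' : α₀ ≤ x := hx
    have step1 : Iaux α₀ Lstar Nstar g x ≤ ∫ t in α₀..x, (N2M / L2m) * t ^ (-(β - σ)) := by
      apply intervalIntegral.integral_mono_on hx' (hqint g hg x hx)
        ((intInt_rpow α₀ x (-(β - σ)) hα₀ hx').const_mul _)
      intro t ht
      have ht0 : 0 < t := lt_of_lt_of_le hα₀ ht.1
      have hnum : Nstar g t ≤ N2M * t ^ σ := (hNbd g hg t ht.1).2
      have hden : L2m * t ^ β ≤ Lstar g t := (hLbd g hg t ht.1).1
      have hden0 : 0 < L2m * t ^ β := by positivity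
      have hstep : Nstar g t / Lstar g t ≤ (N2M * t ^ σ) / (L2m * t ^ β) :=
        div_le_div₀ (by positivity) hnum hden0 hden
      refine hstep.trans (le_of_eq ?_)
      rw [show -(β - σ) = σ - β from by ring, Real.rpow_sub ht0]
      ring
    have step2 : ∫ t in α₀..x, (N2M / L2m) * t ^ (-(β - σ))
        ≤ (N2M / L2m) * (α₀ ^ (1 - (β - σ)) / (β - σ - 1)) := by
      rw [intervalIntegral.integral_const_mul]
      have := int_rpow_le α₀ x (β - σ) hα₀ hx' (by linarith)
      have hc0 : (0:ℝ) ≤ N2M / L2m := by positivity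
      exact mul_le_mul_of_nonneg_left this hc0
    have step3 : α₀ * a * ((N2M / L2m) * (α₀ ^ (1 - (β - σ)) / (β - σ - 1))) = c := by
      rw [hcdef]
      have hX : α₀ ^ (1 - (β - σ)) = (α₀ ^ (β - σ - 2))⁻¹ * α₀⁻¹ := by
        rw [show (1 - (β - σ)) = (-(β - σ - 2)) + (-1) from by ring, Real.rpow_add hα₀,
          Real.rpow_neg hα₀.le, Real.rpow_neg_one]
      rw [hX]
      have hP : α₀ ^ (β - σ - 2) ≠ 0 := ne_of_gt (Real.rpow_pos_of_pos hα₀ _)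
      have hne1 : β - σ - 1 ≠ 0 := ne_of_gt hβσ1
      have hα₀' : α₀ ≠ 0 := ne_of_gt hα₀
      have hL2m' : L2m ≠ 0 := ne_of_gt hL2m
      field_simp
    calc α₀ * a * Iaux α₀ Lstar Nstar g x
        ≤ α₀ * a * ((N2M / L2m) * (α₀ ^ (1 - (β - σ)) / (β - σ - 1))) := by
          apply mul_le_mul_of_nonneg_left (le_trans step1 step2) (by positivity)
      _ = c := step3
  -- E2 bounds
  have hE2lb : ∀ g, MemM α₀ g → ∀ s ∈ Ici α₀,
      Real.exp (-c) ≤ Real.exp (-(α₀ * a * Iaux α₀ Lstar Nstar g s)) :=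
    fun g hg s hs => Real.exp_le_exp.mpr (neg_le_neg (hIub g hg s hs))
  have hE2ub : ∀ g, MemM α₀ g → ∀ s ∈ Ici α₀,
      Real.exp (-(α₀ * a * Iaux α₀ Lstar Nstar g s)) ≤ 1 := by
    intro g hg s hs
    rw [Real.exp_le_one_iff]
    have h1 := hInn g hg s hs
    have : 0 ≤ α₀ * a * Iaux α₀ Lstar Nstar g s := by positivity
    linarith
  -- integrability of the F2 integrand
  have hGint : ∀ g, MemM α₀ g → ∀ x ∈ Ici α₀,
      IntervalIntegrable
        (fun s => Real.exp (-(α₀ * a * Iaux α₀ Lstar Nstar g s)) / (s * Lstar g s))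
        volume α₀ x := by
    intro g hg x hx
    apply ContinuousOn.intervalIntegrable
    have hIcont : ContinuousOn (fun s => Iaux α₀ Lstar Nstar g s) (Set.uIcc α₀ x) := by
      apply intervalIntegral.continuousOn_primitive_interval
      have h := hqint g hg x hx
      rw [intervalIntegrable_iff_integrableOn_Icc_of_le hx] at h
      rw [Set.uIcc_of_le hx]
      exact h
    apply ContinuousOn.div
    · exact Real.continuous_exp.comp_continuousOn ((hIcont.const_smul (α₀ * a)).neg)
    · exact continuousOn_id.mul ((hLcont g hg).mono (hsub x hx))
    · intro s hs
      rw [Set.uIcc_of_le hx] at hs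
      have hs0 : 0 < s := lt_of_lt_of_le hα₀ hs.1
      have := hLpos g hg s hs.1
      positivity
  have hF2eq : ∀ g x, F2 α₀ a Lstar Nstar g x
      = ∫ s in α₀..x, Real.exp (-(α₀ * a * Iaux α₀ Lstar Nstar g s)) / (s * Lstar g s) :=
    fun g x => rfl
  -- monotonicity of F2
  have hF2mono : ∀ g, MemM α₀ g → ∀ x, α₀ ≤ x → ∀ y, x ≤ y →
      F2 α₀ a Lstar Nstar g x ≤ F2 α₀ a Lstar Nstar g y := by
    intro g hg x hx y hxy
    have hy : α₀ ≤ y := le_trans hx hxy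
    have hint2 : IntervalIntegrable
        (fun s => Real.exp (-(α₀ * a * Iaux α₀ Lstar Nstar g s)) / (s * Lstar g s))
        volume x y := by
      apply (hGint g hg y hy).mono_set
      rw [Set.uIcc_of_le hxy, Set.uIcc_of_le hy]
      exact Set.Icc_subset_Icc hx le_rfl
    have hsplit := intervalIntegral.integral_add_adjacent_intervals (hGint g hg x hx) hint2
    have hpos : 0 ≤ ∫ s in x..y,
        Real.exp (-(α₀ * a * Iaux α₀ Lstar Nstar g s)) / (s * Lstar g s) := by
      apply intervalIntegral.integral_nonneg hxy
      intro t ht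
      have ht0 : 0 < t := lt_of_lt_of_le (lt_of_lt_of_le hα₀ hx) ht.1
      have hL := hLpos g hg t (le_trans hx ht.1)
      positivity
    rw [hF2eq g x, hF2eq g y, ← hsplit]
    linarith
  have hF2le : ∀ g, MemM α₀ g → ∀ x, α₀ ≤ x →
      F2 α₀ a Lstar Nstar g x ≤ Finf g := by
    intro g hg x hx
    refine ge_of_tendsto (hFinf g hg) ?_
    filter_upwards [eventually_ge_atTop x] with y hy
    exact hF2mono g hg x hx y hy
  have hF2nn : ∀ g, MemM α₀ g → ∀ x, α₀ ≤ x → 0 ≤ F2 α₀ a Lstar Nstar g x := by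
    intro g hg x hx
    rw [hF2eq]
    apply intervalIntegral.integral_nonneg hx
    intro t ht
    have ht0 : 0 < t := lt_of_lt_of_le hα₀ ht.1
    have hL := hLpos g hg t ht.1
    positivity
  -- lower bound for Finf
  set m := Real.exp (-c) / L2M * (α₀ ^ (-β) / β) with hmdef
  clear_value m
  have hm : 0 < m := by
    rw [hmdef]
    have h1 : 0 < α₀ ^ (-β) := Real.rpow_pos_of_pos hα₀ _
    positivity
  have hFlb : ∀ g, MemM α₀ g → m ≤ Finf g := by
    intro g hg
    have hG : Tendsto (fun x : ℝ => Real.exp (-c) / L2M * ((x ^ (-β) - α₀ ^ (-β)) / (-β)))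
        atTop (nhds (Real.exp (-c) / L2M * ((0 - α₀ ^ (-β)) / (-β)))) := by
      apply Tendsto.const_mul
      apply Tendsto.div_const
      exact (tendsto_rpow_neg_atTop hβpos).sub tendsto_const_nhds
    have hlim : Real.exp (-c) / L2M * ((0 - α₀ ^ (-β)) / (-β)) = m := by
      rw [hmdef]; ring
    rw [hlim] at hG
    refine le_of_tendsto_of_tendsto hG (hFinf g hg) ?_
    filter_upwards [eventually_ge_atTop α₀] with x hx
    have hint : ∫ s in α₀..x, Real.exp (-c) / L2M * s ^ (-(β + 1))
        = Real.exp (-c) / L2M * ((x ^ (-β) - α₀ ^ (-β)) / (-β)) := by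
      rw [intervalIntegral.integral_const_mul, integral_rpow (Or.inr ⟨by intro h; linarith,
        by rw [Set.uIcc_of_le hx]; intro h; exact absurd h.1 (not_le.mpr hα₀)⟩)]
      rw [show -(β + 1) + 1 = -β from by ring]
    rw [← hint, hF2eq]
    apply intervalIntegral.integral_mono_on hx
      ((intInt_rpow α₀ x (-(β + 1)) hα₀ hx).const_mul _) (hGint g hg x hx)
    intro s hs
    have hs0 : 0 < s := lt_of_lt_of_le hα₀ hs.1
    have hLp := hLpos g hg s hs.1
    have hden : s * Lstar g s ≤ L2M * s ^ (β + 1) := by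
      have h1 : Lstar g s ≤ L2M * s ^ β := (hLbd g hg s hs.1).2
      have h2 : s * Lstar g s ≤ s * (L2M * s ^ β) := by nlinarith
      refine h2.trans (le_of_eq ?_)
      rw [Real.rpow_add_one (ne_of_gt hs0)]
      ring
    have hkey : Real.exp (-c) / L2M * s ^ (-(β + 1))
        = Real.exp (-c) / (L2M * s ^ (β + 1)) := by
      rw [Real.rpow_neg hs0.le]
      ring
    rw [hkey]
    exact div_le_div₀ (Real.exp_pos _).le (hE2lb g hg s hs.1) (by positivity) hden
  -- Lipschitz estimates
  set C1 := Nbar2 / L2m * (α₀ ^ (1 - β) / (β - 1))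
    + Lbar2 * N2M / L2m ^ 2 * (α₀ ^ (1 - (2 * β - σ)) / (2 * β - σ - 1)) with hC1def
  clear_value C1
  have hC1nn : 0 ≤ C1 := by
    rw [hC1def]
    have h1 : (0:ℝ) < α₀ ^ (1 - β) := Real.rpow_pos_of_pos hα₀ _
    have h2 : (0:ℝ) < α₀ ^ (1 - (2 * β - σ)) := Real.rpow_pos_of_pos hα₀ _
    have hb1 : (0:ℝ) < β - 1 := by linarith
    positivity
  have hqdiff : ∀ t ∈ Ici α₀, |Nstar f t / Lstar f t - Nstar fs t / Lstar fs t|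
      ≤ D * (Nbar2 / L2m * t ^ (-β) + Lbar2 * N2M / L2m ^ 2 * t ^ (-(2 * β - σ))) := by
    intro t ht
    have ht0 : 0 < t := lt_of_lt_of_le hα₀ ht
    have hbl : 0 < L2m * t ^ β := by positivity
    have hNl := hNlip f fs hf hfs t ht
    have hLl := hLlip f fs hf hfs t ht
    rw [← hDdef] at hNl hLl
    have hbd := quot_diff_bound (Nstar f t) (Nstar fs t) (Lstar f t) (Lstar fs t)
      (Nbar2 * D) (Lbar2 * D) (L2m * t ^ β) (N2M * t ^ σ)
      (hLpos f hf t ht) (hLpos fs hfs t ht) (hNnn fs hfs t ht)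
      hNl hLl
      hbl (hLbd f hf t ht).1 (hLbd fs hfs t ht).1 (hNbd fs hfs t ht).2
    refine hbd.trans (le_of_eq ?_)
    have hTβ : t ^ β ≠ 0 := ne_of_gt (by positivity)
    rw [Real.rpow_neg ht0.le β,
      show -(2 * β - σ) = σ + -β + -β from by ring,
      Real.rpow_add ht0, Real.rpow_add ht0, Real.rpow_neg ht0.le β]
    field_simp
  have hIdiff : ∀ x ∈ Ici α₀,
      |Iaux α₀ Lstar Nstar f x - Iaux α₀ Lstar Nstar fs x| ≤ D * C1 := by
    intro x hx
    have hx' : α₀ ≤ x := hx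
    have hsubdiff : IntervalIntegrable
        (fun t => |Nstar f t / Lstar f t - Nstar fs t / Lstar fs t|) volume α₀ x :=
      ((((hqcont f hf).sub (hqcont fs hfs)).abs).mono (hsub x hx)).intervalIntegrable
    have hbint : IntervalIntegrable
        (fun t : ℝ => D * (Nbar2 / L2m * t ^ (-β) + Lbar2 * N2M / L2m ^ 2 * t ^ (-(2 * β - σ))))
        volume α₀ x :=
      ((((intInt_rpow α₀ x (-β) hα₀ hx').const_mul _).add
        ((intInt_rpow α₀ x (-(2 * β - σ)) hα₀ hx').const_mul _)).const_mul D)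
    have h1 : Iaux α₀ Lstar Nstar f x - Iaux α₀ Lstar Nstar fs x
        = ∫ t in α₀..x, (Nstar f t / Lstar f t - Nstar fs t / Lstar fs t) :=
      (intervalIntegral.integral_sub (hqint f hf x hx) (hqint fs hfs x hx)).symm
    rw [h1]
    refine (intervalIntegral.abs_integral_le_integral_abs hx').trans ?_
    have h2 : ∫ t in α₀..x, |Nstar f t / Lstar f t - Nstar fs t / Lstar fs t|
        ≤ ∫ t in α₀..x,
          D * (Nbar2 / L2m * t ^ (-β) + Lbar2 * N2M / L2m ^ 2 * t ^ (-(2 * β - σ))) := by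
      apply intervalIntegral.integral_mono_on hx' hsubdiff hbint
      intro t ht
      exact hqdiff t ht.1
    refine h2.trans ?_
    rw [intervalIntegral.integral_const_mul,
      intervalIntegral.integral_add ((intInt_rpow α₀ x (-β) hα₀ hx').const_mul _)
        ((intInt_rpow α₀ x (-(2 * β - σ)) hα₀ hx').const_mul _),
      intervalIntegral.integral_const_mul, intervalIntegral.integral_const_mul, hC1def]
    have hi1 := int_rpow_le α₀ x β hα₀ hx' hβ1
    have hi2 := int_rpow_le α₀ x (2 * β - σ) hα₀ hx' (by linarith)
    have hnn1 : (0:ℝ) ≤ Nbar2 / L2m := by positivity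
    have hnn2 : (0:ℝ) ≤ Lbar2 * N2M / L2m ^ 2 := by positivity
    apply mul_le_mul_of_nonneg_left _ hD0
    exact add_le_add (mul_le_mul_of_nonneg_left hi1 hnn1) (mul_le_mul_of_nonneg_left hi2 hnn2)
  have hEdiff : ∀ s ∈ Ici α₀,
      |Real.exp (-(α₀ * a * Iaux α₀ Lstar Nstar f s))
        - Real.exp (-(α₀ * a * Iaux α₀ Lstar Nstar fs s))| ≤ α₀ * a * (D * C1) := by
    intro s hs
    have h1 := exp_neg_lip (α₀ * a * Iaux α₀ Lstar Nstar f s)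
      (α₀ * a * Iaux α₀ Lstar Nstar fs s)
      (by have := hInn f hf s hs; positivity) (by have := hInn fs hfs s hs; positivity)
    refine h1.trans ?_
    have h2 : α₀ * a * Iaux α₀ Lstar Nstar f s - α₀ * a * Iaux α₀ Lstar Nstar fs s
        = α₀ * a * (Iaux α₀ Lstar Nstar f s - Iaux α₀ Lstar Nstar fs s) := by ring
    rw [h2, abs_mul, abs_of_nonneg (by positivity : (0:ℝ) ≤ α₀ * a)]
    exact mul_le_mul_of_nonneg_left (hIdiff s hs) (by positivity)
  have hGdiff : ∀ s ∈ Ici α₀,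
      |Real.exp (-(α₀ * a * Iaux α₀ Lstar Nstar f s)) / (s * Lstar f s)
        - Real.exp (-(α₀ * a * Iaux α₀ Lstar Nstar fs s)) / (s * Lstar fs s)|
      ≤ D * (α₀ * a * C1 / L2m * s ^ (-(β + 1)) + Lbar2 / L2m ^ 2 * s ^ (-(2 * β + 1))) := by
    intro s hs
    have hs0 : 0 < s := lt_of_lt_of_le hα₀ hs
    have hbl : 0 < L2m * s ^ (β + 1) := by positivity
    have hdenf : L2m * s ^ (β + 1) ≤ s * Lstar f s := by
      have h1 : L2m * s ^ β ≤ Lstar f s := (hLbd f hf s hs).1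
      have h2 : s * (L2m * s ^ β) ≤ s * Lstar f s := by nlinarith
      refine le_trans (le_of_eq ?_) h2
      rw [Real.rpow_add_one (ne_of_gt hs0)]; ring
    have hdenfs : L2m * s ^ (β + 1) ≤ s * Lstar fs s := by
      have h1 : L2m * s ^ β ≤ Lstar fs s := (hLbd fs hfs s hs).1
      have h2 : s * (L2m * s ^ β) ≤ s * Lstar fs s := by nlinarith
      refine le_trans (le_of_eq ?_) h2
      rw [Real.rpow_add_one (ne_of_gt hs0)]; ring
    have hDb : |s * Lstar f s - s * Lstar fs s| ≤ s * (Lbar2 * D) := by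
      rw [show s * Lstar f s - s * Lstar fs s = s * (Lstar f s - Lstar fs s) from by ring,
        abs_mul, abs_of_pos hs0]
      have hLl := hLlip f fs hf hfs s hs
      rw [← hDdef] at hLl
      exact mul_le_mul_of_nonneg_left hLl hs0.le
    have hbd := quot_diff_bound
      (Real.exp (-(α₀ * a * Iaux α₀ Lstar Nstar f s)))
      (Real.exp (-(α₀ * a * Iaux α₀ Lstar Nstar fs s)))
      (s * Lstar f s) (s * Lstar fs s)
      (α₀ * a * (D * C1)) (s * (Lbar2 * D)) (L2m * s ^ (β + 1)) 1
      (by have := hLpos f hf s hs; positivity) (by have := hLpos fs hfs s hs; positivity)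
      (Real.exp_pos _).le (hEdiff s hs) hDb hbl hdenf hdenfs (hE2ub fs hfs s hs)
    refine hbd.trans (le_of_eq ?_)
    have hT : s ^ (β + 1) ≠ 0 := ne_of_gt (by positivity)
    rw [show -(2 * β + 1) = 1 - (β + 1) - (β + 1) from by ring,
      Real.rpow_sub hs0, Real.rpow_sub hs0, Real.rpow_one, Real.rpow_neg hs0.le (β + 1)]
    have hL2m' : L2m ≠ 0 := ne_of_gt hL2m
    have hs' : s ≠ 0 := ne_of_gt hs0
    generalize hTT : s ^ (β + 1) = T at hT ⊢
    clear * - hT hL2m' hs'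
    field_simp
  set K := α₀ * a * C1 / L2m * (α₀ ^ (1 - (β + 1)) / (β + 1 - 1))
    + Lbar2 / L2m ^ 2 * (α₀ ^ (1 - (2 * β + 1)) / (2 * β + 1 - 1)) with hKdef
  clear_value K
  have hF2diff : ∀ x, α₀ ≤ x →
      |F2 α₀ a Lstar Nstar f x - F2 α₀ a Lstar Nstar fs x| ≤ D * K := by
    intro x hx
    rw [hF2eq f x, hF2eq fs x,
      ← intervalIntegral.integral_sub (hGint f hf x hx) (hGint fs hfs x hx)]
    refine (intervalIntegral.abs_integral_le_integral_abs hx).trans ?_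
    have hbint : IntervalIntegrable
        (fun s : ℝ => D * (α₀ * a * C1 / L2m * s ^ (-(β + 1))
          + Lbar2 / L2m ^ 2 * s ^ (-(2 * β + 1)))) volume α₀ x :=
      ((((intInt_rpow α₀ x (-(β + 1)) hα₀ hx).const_mul _).add
        ((intInt_rpow α₀ x (-(2 * β + 1)) hα₀ hx).const_mul _)).const_mul D)
    have habsint : IntervalIntegrable
        (fun s => |Real.exp (-(α₀ * a * Iaux α₀ Lstar Nstar f s)) / (s * Lstar f s)
          - Real.exp (-(α₀ * a * Iaux α₀ Lstar Nstar fs s)) / (s * Lstar fs s)|)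
        volume α₀ x := ((hGint f hf x hx).sub (hGint fs hfs x hx)).abs
    have h2 : (∫ s in α₀..x, |Real.exp (-(α₀ * a * Iaux α₀ Lstar Nstar f s)) / (s * Lstar f s)
          - Real.exp (-(α₀ * a * Iaux α₀ Lstar Nstar fs s)) / (s * Lstar fs s)|)
        ≤ ∫ s in α₀..x, D * (α₀ * a * C1 / L2m * s ^ (-(β + 1))
          + Lbar2 / L2m ^ 2 * s ^ (-(2 * β + 1))) := by
      apply intervalIntegral.integral_mono_on hx habsint hbint
      intro s hsx
      exact hGdiff s hsx.1
    refine h2.trans ?_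
    rw [intervalIntegral.integral_const_mul,
      intervalIntegral.integral_add ((intInt_rpow α₀ x (-(β + 1)) hα₀ hx).const_mul _)
        ((intInt_rpow α₀ x (-(2 * β + 1)) hα₀ hx).const_mul _),
      intervalIntegral.integral_const_mul, intervalIntegral.integral_const_mul, hKdef]
    have hi1 := int_rpow_le α₀ x (β + 1) hα₀ hx (by linarith)
    have hi2 := int_rpow_le α₀ x (2 * β + 1) hα₀ hx (by linarith)
    have hnn1 : (0:ℝ) ≤ α₀ * a * C1 / L2m := by positivity
    have hnn2 : (0:ℝ) ≤ Lbar2 / L2m ^ 2 := by positivity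
    apply mul_le_mul_of_nonneg_left _ hD0
    exact add_le_add (mul_le_mul_of_nonneg_left hi1 hnn1) (mul_le_mul_of_nonneg_left hi2 hnn2)
  have hFinfdiff : |Finf f - Finf fs| ≤ D * K := by
    have htend : Tendsto (fun x => |F2 α₀ a Lstar Nstar f x - F2 α₀ a Lstar Nstar fs x|)
        atTop (nhds |Finf f - Finf fs|) := ((hFinf f hf).sub (hFinf fs hfs)).abs
    refine le_of_tendsto htend ?_
    filter_upwards [eventually_ge_atTop α₀] with x hx
    exact hF2diff x hx
  have hK0 : 0 ≤ K := by
    rw [hKdef]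
    have h1 : (0:ℝ) < α₀ ^ (1 - (β + 1)) := Real.rpow_pos_of_pos hα₀ _
    have h2 : (0:ℝ) < α₀ ^ (1 - (2 * β + 1)) := Real.rpow_pos_of_pos hα₀ _
    apply add_nonneg
    · exact mul_nonneg (div_nonneg (mul_nonneg (mul_nonneg hα₀.le ha.le) hC1nn) hL2m.le)
        (div_nonneg h1.le (by linarith))
    · exact mul_nonneg (by positivity) (div_nonneg h2.le (by linarith))
  have hDK0 : 0 ≤ D * K := mul_nonneg hD0 hK0
  have hFf : 0 < Finf f := lt_of_lt_of_le hm (hFlb f hf)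
  have hFfs : 0 < Finf fs := lt_of_lt_of_le hm (hFlb fs hfs)
  have hWpt : ∀ ξ ∈ Ici α₀,
      |Wop α₀ a Lstar Nstar Finf f ξ - Wop α₀ a Lstar Nstar Finf fs ξ| ≤ 2 * (D * K) / m := by
    intro ξ hξ
    have hξ' : α₀ ≤ ξ := hξ
    have hsplit : Wop α₀ a Lstar Nstar Finf f ξ - Wop α₀ a Lstar Nstar Finf fs ξ
        = (F2 α₀ a Lstar Nstar fs ξ - F2 α₀ a Lstar Nstar f ξ) / Finf fs
          + F2 α₀ a Lstar Nstar f ξ * (Finf f - Finf fs) / (Finf f * Finf fs) := by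
      simp only [Wop]
      field_simp
      ring
    rw [hsplit]
    refine (abs_add_le _ _).trans ?_
    have h1 : |(F2 α₀ a Lstar Nstar fs ξ - F2 α₀ a Lstar Nstar f ξ) / Finf fs| ≤ D * K / m := by
      rw [abs_div, abs_of_pos hFfs, abs_sub_comm]
      exact div_le_div₀ hDK0 (hF2diff ξ hξ') hm (hFlb fs hfs)
    have h2 : |F2 α₀ a Lstar Nstar f ξ * (Finf f - Finf fs) / (Finf f * Finf fs)|
        ≤ D * K / m := by
      rw [abs_div, abs_of_pos (mul_pos hFf hFfs), abs_mul,
        abs_of_nonneg (hF2nn f hf ξ hξ')]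
      have hnum : F2 α₀ a Lstar Nstar f ξ * |Finf f - Finf fs| ≤ Finf f * (D * K) :=
        mul_le_mul (hF2le f hf ξ hξ') hFinfdiff (abs_nonneg _) hFf.le
      have hden : Finf f * m ≤ Finf f * Finf fs :=
        mul_le_mul_of_nonneg_left (hFlb fs hfs) hFf.le
      refine le_trans (div_le_div₀ (mul_nonneg hFf.le hDK0) hnum (by positivity) hden) ?_
      rw [mul_div_mul_left _ _ (ne_of_gt hFf)]
    have hsum : D * K / m + D * K / m = 2 * (D * K) / m := by ring
    linarith
  refine le_trans (ciSup_le fun ξp => hWpt ξp.1 ξp.2) (le_of_eq ?_)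
  rw [hKdef, hC1def, hmdef, hcdef]
  rw [show (1 - β) = -(β - 1) from by ring,
      show (1 - (2 * β - σ)) = -(2 * β - σ - 1) from by ring,
      show (1 - (β + 1)) = -β from by ring,
      show (1 - (2 * β + 1)) = -(2 * β) from by ring,
      Real.rpow_neg hα₀.le (β - 1), Real.rpow_neg hα₀.le (2 * β - σ - 1),
      Real.rpow_neg hα₀.le β, Real.rpow_neg hα₀.le (2 * β), Real.exp_neg]
  have e1 : α₀ ^ (β - 1) ≠ 0 := ne_of_gt (Real.rpow_pos_of_pos hα₀ _)
  have e2 : α₀ ^ (2 * β - σ - 1) ≠ 0 := ne_of_gt (Real.rpow_pos_of_pos hα₀ _)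
  have e3 : α₀ ^ β ≠ 0 := ne_of_gt (Real.rpow_pos_of_pos hα₀ _)
  have e4 : α₀ ^ (2 * β) ≠ 0 := ne_of_gt (Real.rpow_pos_of_pos hα₀ _)
  have e5 : Real.exp (a * N2M / (L2m * (β - σ - 1) * α₀ ^ (β - σ - 2))) ≠ 0 :=
    (Real.exp_pos _).ne'
  have e6 : β ≠ 0 := ne_of_gt hβpos
  have e7 : β - 1 ≠ 0 := by intro h; rw [sub_eq_zero] at h; rw [← h] at hβ1; exact lt_irrefl _ hβ1
  have e8 : 2 * β - σ - 1 ≠ 0 := ne_of_gt h2βσ1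
  have e9 : L2m ≠ 0 := ne_of_gt hL2m
  have e10 : L2M ≠ 0 := ne_of_gt hL2M
  clear * - e1 e2 e3 e4 e5 e6 e7 e8 e9 e10
  field_simp
  ring_nf
  field_simp
  ring
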